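/- Let A be a finite dimensional differential graded algebra over a field k with Jacobson radical J of its underlying ungraded algebra. Then J_- := {r ∈ J | d(r) ∈ J} is a two-sided differential graded ideal of A. -/

import Mathlib

/-!
STATEMENT 0: For a finite dimensional DGA `A` over a field `k` with Jacobson radical `J`
(of the underlying ungraded algebra), the set `J₋ = {r ∈ J | d r ∈ J}` is a two-sided
differential graded ideal of `A`.
-/

open scoped DirectSum

section Aux

variable {k A : Type*} [Field k] [Ring A] [Algebra k A]
    (𝒜 : ℤ → Submodule k A) [GradedAlgebra 𝒜]

/-- The sign (anti)automorphism `σ a = ∑ (-1)^n • aₙ`. -/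
noncomputable def sigmaMap : A →ₗ[k] A :=
  (DirectSum.toModule k ℤ A (fun n => ((-1 : k) ^ n) • (𝒜 n).subtype)).comp
    (DirectSum.decomposeLinearEquiv 𝒜).toLinearMap

theorem sigmaMap_of_mem {n : ℤ} {a : A} (ha : a ∈ 𝒜 n) :
    sigmaMap 𝒜 a = ((-1 : k) ^ n) • a := by
  simp only [sigmaMap, LinearMap.comp_apply, LinearEquiv.coe_toLinearMap,
    DirectSum.decomposeLinearEquiv_apply, DirectSum.decompose_of_mem 𝒜 ha,
    ← DirectSum.lof_eq_of k, DirectSum.toModule_lof]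
  rfl

theorem sigmaMap_sigmaMap (a : A) : sigmaMap 𝒜 (sigmaMap 𝒜 a) = a := by
  induction a using DirectSum.Decomposition.inductionOn 𝒜 with
  | zero => simp
  | @homogeneous n x =>
    rw [sigmaMap_of_mem 𝒜 x.2, map_smul, sigmaMap_of_mem 𝒜 x.2, smul_smul,
      ← zpow_add₀ (by norm_num : (-1 : k) ≠ 0), Even.neg_one_zpow ⟨n, rfl⟩, one_smul]
  | add x y hx hy => rw [map_add, map_add, hx, hy]

theorem sigmaMap_one : sigmaMap 𝒜 (1 : A) = 1 := by
  rw [sigmaMap_of_mem 𝒜 (SetLike.one_mem_graded 𝒜), zpow_zero, one_smul]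

theorem sigmaMap_mul (a b : A) : sigmaMap 𝒜 (a * b) = sigmaMap 𝒜 a * sigmaMap 𝒜 b := by
  induction a using DirectSum.Decomposition.inductionOn 𝒜 with
  | zero => simp
  | @homogeneous m x =>
    induction b using DirectSum.Decomposition.inductionOn 𝒜 with
    | zero => simp
    | @homogeneous n y =>
      rw [sigmaMap_of_mem 𝒜 (SetLike.mul_mem_graded x.2 y.2), sigmaMap_of_mem 𝒜 x.2,
        sigmaMap_of_mem 𝒜 y.2, smul_mul_smul, ← zpow_add₀ (by norm_num : (-1 : k) ≠ 0)]
    | add y z hy hz => rw [mul_add, map_add, hy, hz, map_add, mul_add]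
  | add x y hx hy => rw [add_mul, map_add, hx, hy, map_add, add_mul]

theorem sigmaMap_leibniz (d : A →ₗ[k] A)
    (hleib : ∀ (n : ℤ), ∀ a ∈ 𝒜 n, ∀ b : A,
      d (a * b) = d a * b + ((-1 : k) ^ n) • (a * d b))
    (a b : A) : d (a * b) = d a * b + sigmaMap 𝒜 a * d b := by
  induction a using DirectSum.Decomposition.inductionOn 𝒜 with
  | zero => simp
  | @homogeneous n x =>
    rw [hleib n x x.2, sigmaMap_of_mem 𝒜 x.2, smul_mul_assoc]
  | add x y hx hy =>
    rw [add_mul, map_add, hx, hy, map_add, map_add, add_mul, add_mul]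
    abel

theorem sigmaMap_mem_jacobson {a : A} (ha : a ∈ (⊥ : TwoSidedIdeal A).jacobson) :
    sigmaMap 𝒜 a ∈ (⊥ : TwoSidedIdeal A).jacobson := by
  rw [TwoSidedIdeal.mem_jacobson_iff] at ha ⊢
  intro y
  obtain ⟨z, hz⟩ := ha (sigmaMap 𝒜 y)
  refine ⟨sigmaMap 𝒜 z, ?_⟩
  have hz0 : z * sigmaMap 𝒜 y * a + z - 1 = 0 := by
    simpa using hz
  have := congrArg (sigmaMap 𝒜) hz0
  rw [map_sub, map_add, sigmaMap_mul, sigmaMap_mul, sigmaMap_sigmaMap, sigmaMap_one,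
    map_zero] at this
  simpa using this

end Aux

theorem internal_radical_is_dg_ideal
    {k A : Type*} [Field k] [Ring A] [Algebra k A] [FiniteDimensional k A]
    -- the grading of the finite dimensional DGA
    (𝒜 : ℤ → Submodule k A) [GradedAlgebra 𝒜]
    -- the differential
    (d : A →ₗ[k] A)
    (hd2 : ∀ a : A, d (d a) = 0)
    (hdeg : ∀ (n : ℤ), ∀ a ∈ 𝒜 n, d a ∈ 𝒜 (n + 1))
    (hleib : ∀ (n : ℤ), ∀ a ∈ 𝒜 n, ∀ b : A,
      d (a * b) = d a * b + ((-1 : k) ^ n) • (a * d b))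
    -- the Jacobson radical of the underlying ungraded algebra
    (J : TwoSidedIdeal A) (hJ : J = (⊥ : TwoSidedIdeal A).jacobson)
    -- the internal DG ideal J₋
    (Jm : Set A) (hJm : Jm = {r : A | r ∈ J ∧ d r ∈ J}) :
    -- J₋ is a two-sided ideal closed under the differential
    (0 : A) ∈ Jm ∧
    (∀ a ∈ Jm, ∀ b ∈ Jm, a + b ∈ Jm) ∧
    (∀ a ∈ Jm, -a ∈ Jm) ∧
    (∀ x : A, ∀ a ∈ Jm, x * a ∈ Jm) ∧
    (∀ x : A, ∀ a ∈ Jm, a * x ∈ Jm) ∧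
    (∀ a ∈ Jm, d a ∈ Jm) := by
  subst hJm
  have hσ : ∀ a ∈ J, sigmaMap 𝒜 a ∈ J := by
    intro a ha
    rw [hJ] at ha ⊢
    exact sigmaMap_mem_jacobson 𝒜 ha
  refine ⟨⟨J.zero_mem, by rw [map_zero]; exact J.zero_mem⟩,
    fun a ha b hb => ⟨J.add_mem ha.1 hb.1, by rw [map_add]; exact J.add_mem ha.2 hb.2⟩,
    fun a ha => ⟨J.neg_mem ha.1, by rw [map_neg]; exact J.neg_mem ha.2⟩,
    fun x a ha => ⟨J.mul_mem_left x a ha.1, ?_⟩,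
    fun x a ha => ⟨J.mul_mem_right a x ha.1, ?_⟩,
    fun a ha => ⟨ha.2, by rw [hd2 a]; exact J.zero_mem⟩⟩
  · rw [sigmaMap_leibniz 𝒜 d hleib]
    exact J.add_mem (J.mul_mem_left _ _ ha.1) (J.mul_mem_left _ _ ha.2)
  · rw [sigmaMap_leibniz 𝒜 d hleib]
    exact J.add_mem (J.mul_mem_right _ _ ha.2) (J.mul_mem_right _ _ (hσ a ha.1))
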